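/- Let (K, t, c, λ) be a weak mixed distributive law in Cat. Then the composite (λ ▷ c) ∘ (t ◁ δ) : tc ⟶ ctc is unchanged by precomposition with the idempotent Θ = (ε ▷ t ▷ c) ∘ (λ ▷ c) ∘ (t ◁ δ), i.e. (λ ▷ c) ∘ (t ◁ δ) ∘ Θ = (λ ▷ c) ∘ (t ◁ δ); moreover it is unchanged by postcomposition with c ◁ Θ: (c ◁ Θ) ∘ (λ ▷ c) ∘ (t ◁ δ) = (λ ▷ c) ∘ (t ◁ δ). -/
import Mathlib


open CategoryTheory

universe v₁ u₁ v₂ u₂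

variable {K : Type u₁} [Category.{v₁} K]

/-- A weak mixed distributive law `λ : tc ⟶ ct` between a monad `t` and a comonad `c`
on a category `K`, satisfying the four axioms of Böhm–Lack–Street, stated componentwise. -/
structure WeakMixedDistLaw (t : CategoryTheory.Monad K) (c : CategoryTheory.Comonad K) where
  l : (c.toFunctor ⋙ t.toFunctor) ⟶ (t.toFunctor ⋙ c.toFunctor)
  mul_compat : ∀ X : K, t.μ.app (c.obj X) ≫ l.app X =
    t.map (l.app X) ≫ l.app (t.obj X) ≫ c.map (t.μ.app X)
  comul_compat : ∀ X : K, t.map (c.δ.app X) ≫ l.app (c.obj X) ≫ c.map (l.app X) =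
    l.app X ≫ c.δ.app (t.obj X)
  weak_unit : ∀ X : K, t.η.app (c.obj X) ≫ l.app X =
    c.δ.app X ≫ c.map (t.η.app (c.obj X)) ≫ c.map (l.app X) ≫ c.map (c.ε.app (t.obj X))
  weak_counit : ∀ X : K, l.app X ≫ c.ε.app (t.obj X) =
    t.map (t.η.app (c.obj X)) ≫ t.map (l.app X) ≫ t.map (c.ε.app (t.obj X)) ≫ t.μ.app X

lemma aux_key (t : CategoryTheory.Monad K) (c : CategoryTheory.Comonad K)
    (W : WeakMixedDistLaw t c) (X : K) :
    t.map (c.δ.app X) ≫ W.l.app (c.obj X) ≫ c.map (t.map (c.δ.app X)) ≫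
      c.map (W.l.app (c.obj X)) =
    t.map (c.δ.app X) ≫ W.l.app (c.obj X) ≫ c.δ.app (t.obj (c.obj X)) := by
  have hnat : W.l.app (c.obj X) ≫ c.map (t.map (c.δ.app X)) =
      t.map (c.map (c.δ.app X)) ≫ W.l.app (c.obj (c.obj X)) :=
    (W.l.naturality (c.δ.app X)).symm
  calc t.map (c.δ.app X) ≫ W.l.app (c.obj X) ≫ c.map (t.map (c.δ.app X)) ≫
      c.map (W.l.app (c.obj X))
      = t.map (c.δ.app X) ≫ t.map (c.map (c.δ.app X)) ≫ W.l.app (c.obj (c.obj X)) ≫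
        c.map (W.l.app (c.obj X)) := by rw [reassoc_of% hnat]
    _ = t.map (c.δ.app X) ≫ t.map (c.δ.app (c.obj X)) ≫ W.l.app (c.obj (c.obj X)) ≫
        c.map (W.l.app (c.obj X)) := by
        rw [← Functor.map_comp_assoc, Comonad.coassoc, Functor.map_comp_assoc]
    _ = t.map (c.δ.app X) ≫ W.l.app (c.obj X) ≫ c.δ.app (t.obj (c.obj X)) := by
        rw [W.comul_compat (c.obj X)]

/-- The composite (λ c) ∘ (t δ) : tc ⟶ ctc is unchanged by precomposition with the canonical
idempotent Θ and by postcomposition with c ◁ Θ. -/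
theorem lambda_c_t_delta_absorbs_idempotent (t : CategoryTheory.Monad K)
    (c : CategoryTheory.Comonad K) (W : WeakMixedDistLaw t c) :
    (∀ X : K,
      (t.map (c.δ.app X) ≫ W.l.app (c.obj X) ≫ c.ε.app (t.obj (c.obj X))) ≫
        t.map (c.δ.app X) ≫ W.l.app (c.obj X) =
      t.map (c.δ.app X) ≫ W.l.app (c.obj X)) ∧
    (∀ X : K,
      (t.map (c.δ.app X) ≫ W.l.app (c.obj X)) ≫
        c.map (t.map (c.δ.app X) ≫ W.l.app (c.obj X) ≫ c.ε.app (t.obj (c.obj X))) =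
      t.map (c.δ.app X) ≫ W.l.app (c.obj X)) := by
  constructor
  · intro X
    have h1 : c.ε.app (t.obj (c.obj X)) ≫ t.map (c.δ.app X) =
        c.map (t.map (c.δ.app X)) ≫ c.ε.app (t.obj (c.obj (c.obj X))) :=
      (c.ε.naturality (t.map (c.δ.app X))).symm
    have h2 : c.ε.app (t.obj (c.obj (c.obj X))) ≫ W.l.app (c.obj X) =
        c.map (W.l.app (c.obj X)) ≫ c.ε.app (c.obj (t.obj (c.obj X))) :=
      (c.ε.naturality (W.l.app (c.obj X))).symm
    calc (t.map (c.δ.app X) ≫ W.l.app (c.obj X) ≫ c.ε.app (t.obj (c.obj X))) ≫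
        t.map (c.δ.app X) ≫ W.l.app (c.obj X)
        = t.map (c.δ.app X) ≫ W.l.app (c.obj X) ≫ c.map (t.map (c.δ.app X)) ≫
          c.map (W.l.app (c.obj X)) ≫ c.ε.app (c.obj (t.obj (c.obj X))) := by
          simp only [Category.assoc]; rw [reassoc_of% h1, h2]
      _ = t.map (c.δ.app X) ≫ W.l.app (c.obj X) ≫ c.δ.app (t.obj (c.obj X)) ≫
          c.ε.app (c.obj (t.obj (c.obj X))) := by
          rw [reassoc_of% (aux_key t c W X)]
      _ = t.map (c.δ.app X) ≫ W.l.app (c.obj X) := by simp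
  · intro X
    calc (t.map (c.δ.app X) ≫ W.l.app (c.obj X)) ≫
        c.map (t.map (c.δ.app X) ≫ W.l.app (c.obj X) ≫ c.ε.app (t.obj (c.obj X)))
        = (t.map (c.δ.app X) ≫ W.l.app (c.obj X) ≫ c.map (t.map (c.δ.app X)) ≫
          c.map (W.l.app (c.obj X))) ≫ c.map (c.ε.app (t.obj (c.obj X))) := by simp
      _ = t.map (c.δ.app X) ≫ W.l.app (c.obj X) ≫ c.δ.app (t.obj (c.obj X)) ≫
          c.map (c.ε.app (t.obj (c.obj X))) := by
          simp only [Category.assoc]; rw [reassoc_of% (aux_key t c W X)]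
      _ = t.map (c.δ.app X) ≫ W.l.app (c.obj X) := by simp
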